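/- Let p : ℕ → (0,1) be a sequence with n·p(n) → ∞ and p(n)·(ln n)² → 0 as n → ∞. Then k₀(n)·p(n) − 2·ln(n·p(n)) → 2 as n → ∞. -/

import Mathlib

open Filter

set_option maxHeartbeats 1000000

/-- `phi n k p`, the expected number of `k`-vertex induced trees in `G_{n,p}`. -/
noncomputable def phi (n k : ℕ) (p : ℝ) : ℝ :=
  (n.choose k : ℝ) * (k : ℝ) ^ ((k : ℝ) - 2) * p ^ (k - 1) *
    (1 - p) ^ (k * (k - 1) / 2 - (k - 1))

/-- `kzero p n = max{k ∈ {1,…,n} : phi n k (p n) > ln (n·p n)}`. -/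
noncomputable def kzero (p : ℕ → ℝ) (n : ℕ) : ℕ :=
  sSup {k : ℕ | 1 ≤ k ∧ k ≤ n ∧ Real.log (n * p n) < phi n k (p n)}


lemma fact_lower : ∀ k : ℕ, (k:ℝ)^k ≤ k.factorial * Real.exp k := by
  intro k
  induction k with
  | zero => simp
  | succ k ih =>
    rcases Nat.eq_zero_or_pos k with hk | hk
    · subst hk
      have : ((0+1:ℕ):ℝ)^(0+1) = 1 := by norm_num
      rw [this]
      have : ((Nat.factorial (0+1)):ℝ) = 1 := by norm_num [Nat.factorial]
      rw [this, one_mul]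
      have := Real.add_one_le_exp (((0+1:ℕ):ℝ))
      push_cast at this ⊢
      linarith
    have hkR : (0:ℝ) < k := by exact_mod_cast hk
    have h2 : ((k:ℝ)+1)^k ≤ (k:ℝ)^k * Real.exp 1 := by
      have he : ((k:ℝ)+1)^k = (k:ℝ)^k * (1 + 1/(k:ℝ))^k := by
        rw [← mul_pow]; congr 1; field_simp
      rw [he]
      have h3 : (1 + 1/(k:ℝ))^k ≤ (Real.exp (1/(k:ℝ)))^k := by
        apply pow_le_pow_left₀ (by positivity)
        have := Real.add_one_le_exp (1/(k:ℝ)); linarith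
      have h4 : (Real.exp (1/(k:ℝ)))^k = Real.exp 1 := by
        rw [← Real.exp_nat_mul]
        rw [show (k:ℝ) * (1/(k:ℝ)) = 1 by field_simp]
      rw [h4] at h3
      exact mul_le_mul_of_nonneg_left h3 (by positivity)
    have goal2 : ((k:ℝ)+1)^(k+1) ≤ ((k:ℝ)+1) * (k.factorial * Real.exp k * Real.exp 1) := by
      calc ((k:ℝ)+1)^(k+1) = ((k:ℝ)+1) * ((k:ℝ)+1)^k := by ring
        _ ≤ ((k:ℝ)+1) * ((k:ℝ)^k * Real.exp 1) :=
            mul_le_mul_of_nonneg_left h2 (by positivity)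
        _ ≤ ((k:ℝ)+1) * (k.factorial * Real.exp k * Real.exp 1) := by
            apply mul_le_mul_of_nonneg_left _ (by positivity)
            exact mul_le_mul_of_nonneg_right ih (le_of_lt (Real.exp_pos 1))
    have heq : ((k:ℝ)+1) * (k.factorial * Real.exp k * Real.exp 1)
        = ((k+1).factorial : ℝ) * Real.exp ((k:ℕ)+1:ℕ) := by
      rw [Nat.factorial_succ]
      push_cast
      rw [Real.exp_add]
      ring
    calc ((k+1:ℕ):ℝ)^(k+1) = ((k:ℝ)+1)^(k+1) := by push_cast; ring
      _ ≤ ((k:ℝ)+1) * (k.factorial * Real.exp k * Real.exp 1) := goal2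
      _ = ((k+1).factorial : ℝ) * Real.exp ((k+1:ℕ):ℝ) := by rw [heq]

lemma fact_upper : ∀ k : ℕ, 1 ≤ k → (k.factorial : ℝ) ≤ (k:ℝ)^(k+1) * Real.exp (1 - k) := by
  intro k
  induction k with
  | zero => intro h; omega
  | succ k ih =>
    intro _
    rcases Nat.eq_zero_or_pos k with hk | hk
    · subst hk; simp
    have hkR : (0:ℝ) < k := by exact_mod_cast hk
    have key : Real.exp 1 * (k:ℝ)^(k+1) ≤ ((k:ℝ)+1)^(k+1) := by
      have h0 : Real.exp (1/((k:ℝ)+1)) ≤ ((k:ℝ)+1)/(k:ℝ) := by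
        have h5 := Real.add_one_le_exp (-(1/((k:ℝ)+1)))
        have hpos : (0:ℝ) < 1 - 1/((k:ℝ)+1) := by
          have : (1:ℝ)/((k:ℝ)+1) < 1 := by rw [div_lt_one (by positivity)]; linarith
          linarith
        have h6 : Real.exp (1/((k:ℝ)+1)) * (1 - 1/((k:ℝ)+1)) ≤ 1 := by
          calc Real.exp (1/((k:ℝ)+1)) * (1 - 1/((k:ℝ)+1))
              ≤ Real.exp (1/((k:ℝ)+1)) * Real.exp (-(1/((k:ℝ)+1))) :=
                mul_le_mul_of_nonneg_left (by linarith) (le_of_lt (Real.exp_pos _))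
            _ = 1 := by rw [← Real.exp_add]; simp
        have h7 : ((k:ℝ)+1)/(k:ℝ) = 1 / (1 - 1/((k:ℝ)+1)) := by
          rw [show (1:ℝ) - 1/((k:ℝ)+1) = (k:ℝ)/((k:ℝ)+1) by field_simp; ring]
          rw [one_div_div]
        rw [h7, le_div_iff₀ hpos]
        linarith
      have h8 : Real.exp 1 ≤ (((k:ℝ)+1)/(k:ℝ))^(k+1) := by
        have h9 := pow_le_pow_left₀ (le_of_lt (Real.exp_pos _)) h0 (k+1)
        rw [← Real.exp_nat_mul] at h9
        rw [show ((k+1:ℕ):ℝ) * (1/((k:ℝ)+1)) = 1 by push_cast; field_simp] at h9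
        exact h9
      calc Real.exp 1 * (k:ℝ)^(k+1) ≤ (((k:ℝ)+1)/(k:ℝ))^(k+1) * (k:ℝ)^(k+1) :=
            mul_le_mul_of_nonneg_right h8 (by positivity)
        _ = ((k:ℝ)+1)^(k+1) := by rw [div_pow, div_mul_cancel₀]; positivity
    have step : ((k+1).factorial : ℝ) = ((k:ℝ)+1) * k.factorial := by
      rw [Nat.factorial_succ]; push_cast; ring
    have main : ((k+1).factorial : ℝ) ≤ ((k:ℝ)+1)^(k+2) * Real.exp (-(k:ℝ)) := by
      calc ((k+1).factorial : ℝ) = ((k:ℝ)+1) * k.factorial := step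
        _ ≤ ((k:ℝ)+1) * ((k:ℝ)^(k+1) * Real.exp (1 - k)) :=
            mul_le_mul_of_nonneg_left (ih hk) (by positivity)
        _ = ((k:ℝ)+1) * ((Real.exp 1 * (k:ℝ)^(k+1)) * Real.exp (-(k:ℝ))) := by
            rw [show (1:ℝ) - k = 1 + (-(k:ℝ)) by ring, Real.exp_add]; ring
        _ ≤ ((k:ℝ)+1) * (((k:ℝ)+1)^(k+1) * Real.exp (-(k:ℝ))) := by
            apply mul_le_mul_of_nonneg_left _ (by positivity)
            exact mul_le_mul_of_nonneg_right key (le_of_lt (Real.exp_pos _))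
        _ = ((k:ℝ)+1)^(k+2) * Real.exp (-(k:ℝ)) := by ring
    calc ((k+1).factorial : ℝ) ≤ ((k:ℝ)+1)^(k+2) * Real.exp (-(k:ℝ)) := main
      _ = ((k+1:ℕ):ℝ)^(k+1+1) * Real.exp (1 - ((k+1:ℕ):ℝ)) := by
          push_cast
          rw [show (1:ℝ) - ((k:ℝ)+1) = -(k:ℝ) by ring]

lemma exponent_eq (k : ℕ) : k * (k - 1) / 2 - (k - 1) = (k-1) * (k-2) / 2 := by
  rcases Nat.lt_or_ge k 2 with h | h
  · interval_cases k <;> rfl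
  obtain ⟨j, rfl⟩ : ∃ j, k = j + 2 := ⟨k - 2, by omega⟩
  have e1 : j+2-1 = j+1 := by omega
  have e2 : j+2-2 = j := by omega
  rw [e1, e2]
  have hev : 2 ∣ (j+1) * j := by
    have := (Nat.even_mul_succ_self j).two_dvd
    rwa [mul_comm] at this
  have hev2 : 2 ∣ (j+2) * (j+1) := by
    have := (Nat.even_mul_succ_self (j+1)).two_dvd
    rwa [mul_comm] at this
  have d1 := Nat.div_mul_cancel hev
  have d2 := Nat.div_mul_cancel hev2
  have hx : (j+2) * (j+1) = (j+1) * j + 2*(j+1) := by ring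
  omega

lemma exponent_cast {k : ℕ} (hk : 1 ≤ k) :
    (((k-1) * (k-2) / 2 : ℕ) : ℝ) = ((k:ℝ)-1) * ((k:ℝ)-2) / 2 := by
  rcases Nat.lt_or_ge k 2 with h | h
  · interval_cases k
    · simp
  · obtain ⟨j, rfl⟩ : ∃ j, k = j + 2 := ⟨k - 2, by omega⟩
    have e1 : j+2-1 = j+1 := by omega
    have e2 : j+2-2 = j := by omega
    rw [e1, e2]
    have hev : 2 ∣ (j+1) * j := by
      have := (Nat.even_mul_succ_self j).two_dvd
      rwa [mul_comm] at this
    have h2 : ((j+1) * j / 2 : ℕ) * 2 = (j+1)*j := Nat.div_mul_cancel hev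
    have h3 : (((j+1) * j / 2 : ℕ):ℝ) * 2 = ((j:ℝ)+1)*(j:ℝ) := by
      exact_mod_cast congrArg (Nat.cast : ℕ → ℝ) h2
    push_cast
    linarith

lemma cast_sub_one {k : ℕ} (hk : 1 ≤ k) : ((k-1:ℕ):ℝ) = (k:ℝ) - 1 := by
  push_cast [Nat.cast_sub hk]; ring

lemma phi_pos {n k : ℕ} {q : ℝ} (hk : 1 ≤ k) (hkn : k ≤ n) (hq : 0 < q) (hq1 : q < 1) :
    0 < phi n k q := by
  have h1 : 0 < (n.choose k : ℝ) := by exact_mod_cast Nat.choose_pos hkn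
  have hq2 : (0:ℝ) < 1 - q := by linarith
  have hk0 : (0:ℝ) < k := by exact_mod_cast hk
  unfold phi
  positivity

lemma log_phi {n k : ℕ} {q : ℝ} (hk : 1 ≤ k) (hkn : k ≤ n) (hq : 0 < q) (hq1 : q < 1) :
    Real.log (phi n k q) = Real.log (n.choose k) + ((k:ℝ)-2) * Real.log k
      + ((k:ℝ)-1) * Real.log q + (((k:ℝ)-1) * ((k:ℝ)-2) / 2) * Real.log (1-q) := by
  have h1 : (n.choose k : ℝ) ≠ 0 := by
    have := Nat.choose_pos hkn; positivity
  have hk0 : (0:ℝ) < k := by exact_mod_cast hk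
  have h2 : (k:ℝ) ^ ((k:ℝ) - 2) ≠ 0 := by positivity
  have h3 : q ^ (k-1) ≠ 0 := by positivity
  have h4 : (1-q) ^ (k * (k-1) / 2 - (k-1)) ≠ 0 := by
    have : (0:ℝ) < 1 - q := by linarith
    positivity
  unfold phi
  rw [Real.log_mul (by positivity) h4, Real.log_mul (by positivity) h3,
    Real.log_mul h1 h2, Real.log_rpow hk0, Real.log_pow, Real.log_pow,
    exponent_eq, exponent_cast hk, cast_sub_one hk]

lemma log_choose_le {n k : ℕ} (hk : 1 ≤ k) (hkn : k ≤ n) :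
    Real.log (n.choose k) ≤ (k:ℝ) * (Real.log n + 1) - (k:ℝ) * Real.log k := by
  have hk0 : (0:ℝ) < k := by exact_mod_cast hk
  have hn0 : (0:ℝ) < n := by exact_mod_cast (hk.trans hkn)
  have h1 : (n.choose k : ℝ) ≤ (n:ℝ)^k * Real.exp k / (k:ℝ)^k := by
    have h2 : (n.choose k : ℝ) ≤ ((n:ℝ)^k) / (k.factorial) := by
      exact_mod_cast Nat.choose_le_pow_div k n
    have h3 : ((n:ℝ)^k) / (k.factorial) ≤ (n:ℝ)^k * Real.exp k / (k:ℝ)^k := by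
      rw [div_le_div_iff₀ (by positivity) (by positivity)]
      calc (n:ℝ)^k * (k:ℝ)^k ≤ (n:ℝ)^k * (k.factorial * Real.exp k) :=
            mul_le_mul_of_nonneg_left (fact_lower k) (by positivity)
        _ = (n:ℝ)^k * Real.exp k * k.factorial := by ring
    exact h2.trans h3
  calc Real.log (n.choose k) ≤ Real.log ((n:ℝ)^k * Real.exp k / (k:ℝ)^k) := by
        apply Real.log_le_log (by exact_mod_cast Nat.choose_pos hkn) h1
    _ = (k:ℝ) * (Real.log n + 1) - (k:ℝ) * Real.log k := by
        rw [Real.log_div (by positivity) (by positivity), Real.log_mul (by positivity)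
          (Real.exp_ne_zero _), Real.log_pow, Real.log_pow, Real.log_exp]
        ring

lemma log_choose_ge {n k : ℕ} (hk : 1 ≤ k) (hkn : k ≤ n) :
    (k:ℝ) * Real.log ((n+1-k:ℕ)) + ((k:ℝ) - 1) - ((k:ℝ)+1) * Real.log k
      ≤ Real.log (n.choose k) := by
  have hk0 : (0:ℝ) < k := by exact_mod_cast hk
  have hm : 1 ≤ n + 1 - k := by omega
  have hm0 : (0:ℝ) < ((n+1-k:ℕ):ℝ) := by exact_mod_cast hm
  have h1 : ((n+1-k:ℕ):ℝ)^k * Real.exp ((k:ℝ)-1) / (k:ℝ)^(k+1) ≤ (n.choose k : ℝ) := by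
    have h2 : (((n+1-k:ℕ):ℝ)^k) / (k.factorial) ≤ (n.choose k : ℝ) := by
      exact_mod_cast Nat.pow_le_choose k n
    refine le_trans ?_ h2
    rw [div_le_div_iff₀ (by positivity) (by positivity)]
    have h3 : (k.factorial:ℝ) * Real.exp ((k:ℝ)-1) ≤ (k:ℝ)^(k+1) := by
      calc (k.factorial:ℝ) * Real.exp ((k:ℝ)-1)
          ≤ ((k:ℝ)^(k+1) * Real.exp (1-(k:ℝ))) * Real.exp ((k:ℝ)-1) :=
            mul_le_mul_of_nonneg_right (fact_upper k hk) (le_of_lt (Real.exp_pos _))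
        _ = (k:ℝ)^(k+1) * Real.exp ((1-(k:ℝ)) + ((k:ℝ)-1)) := by rw [Real.exp_add]; ring
        _ = (k:ℝ)^(k+1) := by norm_num
    calc ((n+1-k:ℕ):ℝ)^k * Real.exp ((k:ℝ)-1) * (k.factorial:ℝ)
        = ((n+1-k:ℕ):ℝ)^k * ((k.factorial:ℝ) * Real.exp ((k:ℝ)-1)) := by ring
      _ ≤ ((n+1-k:ℕ):ℝ)^k * (k:ℝ)^(k+1) :=
          mul_le_mul_of_nonneg_left h3 (by positivity)

  calc (k:ℝ) * Real.log ((n+1-k:ℕ)) + ((k:ℝ) - 1) - ((k:ℝ)+1) * Real.log k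
      = Real.log (((n+1-k:ℕ):ℝ)^k * Real.exp ((k:ℝ)-1) / (k:ℝ)^(k+1)) := by
        rw [Real.log_div (by positivity) (by positivity), Real.log_mul (by positivity)
          (Real.exp_ne_zero _), Real.log_pow, Real.log_pow, Real.log_exp]
        push_cast
        ring
    _ ≤ Real.log (n.choose k) := Real.log_le_log (by positivity) h1

lemma log_one_sub_le {q : ℝ} (hq1 : q < 1) : Real.log (1-q) ≤ -q := by
  have := Real.log_le_sub_one_of_pos (show (0:ℝ) < 1-q by linarith)
  linarith

lemma log_one_sub_ge {q : ℝ} (hq : 0 ≤ q) (hq2 : q ≤ 1/2) :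
    -(q + 2*q^2) ≤ Real.log (1-q) := by
  have h0 : (0:ℝ) < 1 - q := by linarith
  have h := Real.log_le_sub_one_of_pos (show (0:ℝ) < (1-q)⁻¹ by positivity)
  rw [Real.log_inv] at h
  have h2 : (1-q)⁻¹ - 1 = q/(1-q) := by field_simp; ring
  rw [h2] at h
  have h3 : q/(1-q) ≤ q + 2*q^2 := by
    rw [div_le_iff₀ h0]
    nlinarith
  linarith

lemma log_one_sub_ge' {x : ℝ} (hx : 0 ≤ x) (hx2 : x ≤ 1/2) : -(2*x) ≤ Real.log (1-x) := by
  have := log_one_sub_ge hx hx2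
  nlinarith

lemma hE_nonneg {k : ℕ} (hk : 1 ≤ k) : 0 ≤ ((k:ℝ)-1) * ((k:ℝ)-2) / 2 := by
  rcases Nat.lt_or_ge k 2 with h | h
  · interval_cases k; norm_num
  · have : (2:ℝ) ≤ k := by exact_mod_cast h
    nlinarith

lemma hE_le {k : ℕ} (hk : 1 ≤ k) : ((k:ℝ)-1) * ((k:ℝ)-2) / 2 ≤ (k:ℝ)^2/2 := by
  have : (1:ℝ) ≤ k := by exact_mod_cast hk
  nlinarith

lemma phi_upper {n k : ℕ} {q : ℝ} (hk : 1 ≤ k) (hkn : k ≤ n) (hq : 0 < q) (hq1 : q < 1) :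
    Real.log (phi n k q) ≤ (k:ℝ)*(Real.log n + 1 + Real.log q) - Real.log q
      - 2*Real.log k - q*(((k:ℝ)-1)*((k:ℝ)-2)/2) := by
  rw [log_phi hk hkn hq hq1]
  have h1 := log_choose_le hk hkn
  have h2 : (((k:ℝ)-1) * ((k:ℝ)-2) / 2) * Real.log (1-q)
      ≤ (((k:ℝ)-1) * ((k:ℝ)-2) / 2) * (-q) :=
    mul_le_mul_of_nonneg_left (log_one_sub_le hq1) (hE_nonneg hk)
  nlinarith [h1, h2]

lemma phi_lower {n k : ℕ} {q : ℝ} (hk : 1 ≤ k) (h2k : 2*k ≤ n) (hq : 0 < q)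
    (hq2 : q ≤ 1/2) :
    (k:ℝ)*(Real.log n + 1 + Real.log q) - 2*(k:ℝ)^2/(n:ℝ) - 3*Real.log k - Real.log q
      - 1 - (q + 2*q^2)*(k:ℝ)^2/2 ≤ Real.log (phi n k q) := by
  have hkn : k ≤ n := by omega
  have hq1 : q < 1 := by linarith
  have hk1 : (1:ℝ) ≤ k := by exact_mod_cast hk
  have hn0 : (0:ℝ) < n := by
    have : 1 ≤ n := le_trans hk hkn
    exact_mod_cast Nat.pos_of_ne_zero (by omega)
  have hkR : (0:ℝ) < k := by linarith
  have h2kR : 2*(k:ℝ) ≤ n := by exact_mod_cast h2k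
  rw [log_phi hk hkn hq hq1]
  -- bound on log (n+1-k)
  have hcast : ((n+1-k:ℕ):ℝ) = (n:ℝ) + 1 - k := by
    have : k ≤ n + 1 := by omega
    push_cast [Nat.cast_sub this]; ring
  have hnk : (0:ℝ) < (n:ℝ) - k := by linarith
  have hfrac : (k:ℝ)/(n:ℝ) ≤ 1/2 := by
    rw [div_le_iff₀ hn0]; linarith
  have hfrac0 : (0:ℝ) ≤ (k:ℝ)/(n:ℝ) := by positivity
  have hlogm : Real.log n - 2*(k:ℝ)/(n:ℝ) ≤ Real.log ((n+1-k:ℕ)) := by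
    have e1 : (n:ℝ) * (1 - (k:ℝ)/(n:ℝ)) = (n:ℝ) - k := by field_simp
    have h3 : Real.log ((n:ℝ) - k) ≤ Real.log ((n+1-k:ℕ):ℝ) := by
      apply Real.log_le_log hnk; rw [hcast]; linarith
    have h4 : Real.log ((n:ℝ) - k) = Real.log n + Real.log (1 - (k:ℝ)/(n:ℝ)) := by
      rw [← e1, Real.log_mul (ne_of_gt hn0) (by rw [e1] at *; intro hz; nlinarith)]
    have h5 := log_one_sub_ge' hfrac0 hfrac
    rw [h4] at h3
    have : 2*((k:ℝ)/(n:ℝ)) = 2*(k:ℝ)/(n:ℝ) := by ring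
    linarith
  have h6 := log_choose_ge hk hkn
  have h7 : (k:ℝ) * (Real.log n - 2*(k:ℝ)/(n:ℝ)) ≤ (k:ℝ) * Real.log ((n+1-k:ℕ)) :=
    mul_le_mul_of_nonneg_left hlogm (by linarith)
  -- bound on the (1-q) term
  have h8 : Real.log (1-q) ≤ 0 := Real.log_nonpos (by linarith) (by linarith)
  have h9 : (((k:ℝ)-1) * ((k:ℝ)-2) / 2) * Real.log (1-q)
      ≥ ((k:ℝ)^2/2) * Real.log (1-q) := by
    apply mul_le_mul_of_nonpos_right (hE_le hk) h8
  have h10 : ((k:ℝ)^2/2) * Real.log (1-q) ≥ ((k:ℝ)^2/2) * (-(q + 2*q^2)) :=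
    mul_le_mul_of_nonneg_left (log_one_sub_ge (le_of_lt hq) hq2) (by positivity)
  have hexp : (k:ℝ) * (Real.log n - 2*(k:ℝ)/(n:ℝ)) = (k:ℝ)*Real.log n - 2*(k:ℝ)^2/(n:ℝ) := by
    field_simp
  nlinarith [h6, h7, h9, h10]

lemma part2 {n k : ℕ} {q e : ℝ} (he : 0 < e) (hk : 1 ≤ k) (hkn : k ≤ n)
    (hq : 0 < q) (hq1 : q < 1) (hL1 : 1 ≤ Real.log ((n:ℝ)*q))
    (hqe : q ≤ e/6) (hqlogn : q * Real.log n ≤ e/2)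
    (hnq1 : 1 ≤ (n:ℝ)*q)
    (hkq : 2*Real.log ((n:ℝ)*q) + 2 + e ≤ (k:ℝ)*q) :
    phi n k q ≤ Real.log ((n:ℝ)*q) := by
  set L := Real.log ((n:ℝ)*q) with hLdef
  set K := (k:ℝ) with hKdef
  have hK1 : (1:ℝ) ≤ K := by rw [hKdef]; exact_mod_cast hk
  have hn0 : (0:ℝ) < n := by
    have : 1 ≤ n := le_trans hk hkn
    exact_mod_cast this
  have hlogmul : L = Real.log n + Real.log q := Real.log_mul (ne_of_gt hn0) (ne_of_gt hq)
  have hub := phi_upper hk hkn hq hq1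
  -- -log q ≤ log n
  have hinvq : -Real.log q ≤ Real.log n := by
    have h1n : 1/(n:ℝ) ≤ q := by
      rw [div_le_iff₀ hn0]; linarith [mul_comm (n:ℝ) q]
    have := Real.log_le_log (by positivity) h1n
    rw [Real.log_div one_ne_zero (ne_of_gt hn0), Real.log_one] at this
    linarith
  have hlogk0 : 0 ≤ Real.log k := Real.log_nonneg hK1
  -- quadratic term
  have key1 : q*(K^2 - 3*K)/2 ≤ q*((K-1)*(K-2)/2) := by
    have : q*((K-1)*(K-2)/2) - q*(K^2-3*K)/2 = q := by ring
    linarith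
  have key2 : (K/2)*(2*L+2+e) ≤ (K/2)*(K*q) := by
    apply mul_le_mul_of_nonneg_left hkq (by linarith)
  have key3 : K*(3*q/2) ≤ K*(e/4) := by
    apply mul_le_mul_of_nonneg_left (by linarith) (by linarith)
  -- K * e/4 ≥ log n
  have hKbig : Real.log n ≤ K*(e/4) := by
    have hc : Real.log n * q ≤ (K*(e/4)) * q := by
      have h4 : (e/4)*(K*q) ≥ (e/4)*(2*L+2+e) :=
        mul_le_mul_of_nonneg_left hkq (by linarith)
      have h5 : (e/4)*(2*L+2+e) ≥ e := by
        have e0 : 0 ≤ e*(L-1) := mul_nonneg (le_of_lt he) (by linarith)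
        have e1 : (e/4)*(2*L+2+e) = e + (e*(L-1))/2 + e^2/4 := by ring
        nlinarith [sq_nonneg e]
      calc Real.log n * q = q * Real.log n := by ring
        _ ≤ e/2 := hqlogn
        _ ≤ e := by linarith
        _ ≤ (e/4)*(K*q) := by linarith
        _ = (K*(e/4))*q := by ring
    exact le_of_mul_le_mul_right hc hq
  have hexp1 : K*(Real.log n + 1 + Real.log q) = K*(L+1) := by rw [hlogmul]; ring
  have hexp2 : K*(L+1) - (K/2)*(2*L+2+e) = -(K*(e/2)) := by ring
  have hexp3 : q*(K^2-3*K)/2 = (K/2)*(K*q) - K*(3*q/2) := by ring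
  have hexp4 : K*(e/2) = K*(e/4) + K*(e/4) := by ring
  have hlog_le : Real.log (phi n k q) ≤ 0 := by
    rw [hexp1] at hub
    linarith
  have hL0 : (0:ℝ) < L := by linarith
  calc phi n k q = Real.exp (Real.log (phi n k q)) :=
        (Real.exp_log (phi_pos hk hkn hq hq1)).symm
    _ ≤ Real.exp (Real.log L) := by
        apply Real.exp_le_exp.2
        have : 0 ≤ Real.log L := Real.log_nonneg hL1
        linarith
    _ = L := Real.exp_log hL0

lemma part1 {n k : ℕ} {q e : ℝ} (he : 0 < e) (he1 : e ≤ 1) (hk : 1 ≤ k) (h2k : 2*k ≤ n)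
    (hq : 0 < q) (hq1 : q < 1) (hL1 : 1 ≤ Real.log ((n:ℝ)*q))
    (hlogn1 : 1 ≤ Real.log n)
    (hqs : q ≤ e/256) (hqlogn : q * Real.log n ≤ e/256)
    (hkq1 : 2*Real.log ((n:ℝ)*q) + 2 - e/2 ≤ (k:ℝ)*q)
    (hkq2 : (k:ℝ)*q ≤ 2*Real.log ((n:ℝ)*q) + 2 - e/4)
    (hfrac : 64*(2*Real.log ((n:ℝ)*q)+3) ≤ e*((n:ℝ)*q)) :
    Real.log ((n:ℝ)*q) < phi n k q := by
  set L := Real.log ((n:ℝ)*q) with hLdef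
  set K := (k:ℝ) with hKdef
  have hK1 : (1:ℝ) ≤ K := by rw [hKdef]; exact_mod_cast hk
  have hkn : k ≤ n := by omega
  have hn0 : (0:ℝ) < n := by
    have : 1 ≤ n := le_trans hk hkn
    exact_mod_cast this
  have hK0 : (0:ℝ) < K := by linarith
  have hnq0 : (0:ℝ) < (n:ℝ)*q := by positivity
  have hlogmul : L = Real.log n + Real.log q := Real.log_mul (ne_of_gt hn0) (ne_of_gt hq)
  have hq2 : q ≤ 1/2 := by linarith
  have hlow := phi_lower hk h2k hq hq2
  have hLlogn : L ≤ Real.log n := by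
    apply Real.log_le_log hnq0
    nlinarith
  -- 64 K ≤ e n
  have hKn : 64*K ≤ e*(n:ℝ) := by
    have hc : (64*K)*q ≤ (e*(n:ℝ))*q := by
      calc (64*K)*q = 64*(K*q) := by ring
        _ ≤ 64*(2*L+2-e/4) := by linarith
        _ ≤ 64*(2*L+3) := by linarith
        _ ≤ e*((n:ℝ)*q) := hfrac
        _ = (e*(n:ℝ))*q := by ring
    exact le_of_mul_le_mul_right hc hq
  have h2ksq : 2*K^2/(n:ℝ) ≤ K*(e/32) := by
    rw [div_le_iff₀ hn0]
    nlinarith [mul_nonneg (sub_nonneg.2 hKn) (le_of_lt hK0)]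
  -- quadratic error terms
  have ha1 : K*q ≤ 2*L+2 := by linarith
  have hstep1 : q*(2*L+2) ≤ e/64 := by
    have h1 : q*L ≤ q*Real.log n := mul_le_mul_of_nonneg_left hLlogn (le_of_lt hq)
    have h2 : q*(2*L+2) = 2*(q*L) + 2*q := by ring
    linarith
  have hstep2 : q^2*K^2 ≤ K*(e/64) := by
    have a2 : q^2*K^2 = (q*K)*(q*K) := by ring
    have a0 : 0 ≤ q*K := by positivity
    have a3 : (q*K)*(q*K) ≤ (q*K)*(2*L+2) := by
      apply mul_le_mul_of_nonneg_left _ a0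
      calc q*K = K*q := by ring
        _ ≤ 2*L+2 := ha1
    have a4 : (q*K)*(2*L+2) = K*(q*(2*L+2)) := by ring
    have a5 : K*(q*(2*L+2)) ≤ K*(e/64) :=
      mul_le_mul_of_nonneg_left hstep1 (le_of_lt hK0)
    calc q^2*K^2 = (q*K)*(q*K) := a2
      _ ≤ (q*K)*(2*L+2) := a3
      _ = K*(q*(2*L+2)) := a4
      _ ≤ K*(e/64) := a5
  have hb1 : q*K^2/2 ≤ K*(L+1-e/8) := by
    have h1 : (K/2)*(K*q) ≤ (K/2)*(2*L+2-e/4) :=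
      mul_le_mul_of_nonneg_left hkq2 (by linarith)
    have h2 : q*K^2/2 = (K/2)*(K*q) := by ring
    have h3 : (K/2)*(2*L+2-e/4) = K*(L+1-e/8) := by ring
    linarith
  have hqerr : (q + 2*q^2)*K^2/2 ≤ K*(L+1-e/8) + K*(e/64) := by
    have : (q + 2*q^2)*K^2/2 = q*K^2/2 + q^2*K^2 := by ring
    linarith
  -- K e/16 ≥ 7 log n
  have hKe : 7*Real.log n ≤ K*(e/16) := by
    have hc : (7*Real.log n)*q ≤ (K*(e/16))*q := by
      have h4 : (e/16)*(K*q) ≥ (e/16)*(2*L+2-e/2) :=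
        mul_le_mul_of_nonneg_left hkq1 (by linarith)
      have h5 : (e/16)*(2*L+2-e/2) ≥ e/8 := by
        have e0 : 0 ≤ e*(L-1) := mul_nonneg (le_of_lt he) (by linarith)
        have e2 : e^2 ≤ e := by nlinarith
        have e1 : (e/16)*(2*L+2-e/2) = e/4 + (e*(L-1))/8 - e^2/32 := by ring
        linarith
      calc (7*Real.log n)*q = 7*(q*Real.log n) := by ring
        _ ≤ 7*(e/256) := by linarith
        _ ≤ e/8 := by linarith
        _ ≤ (e/16)*(K*q) := by linarith
        _ = (K*(e/16))*q := by ring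
    exact le_of_mul_le_mul_right hc hq
  have hlogk : Real.log k ≤ Real.log n := by
    apply Real.log_le_log (by exact_mod_cast hk)
    exact_mod_cast hkn
  have hmlogq : Real.log q < 0 := Real.log_neg hq hq1
  have hexp1 : K*(Real.log n + 1 + Real.log q) = K*(L+1) := by rw [hlogmul]; ring
  have hexpand : K*(L+1) - K*(L+1-e/8) = K*(e/8) := by ring
  have hexp4 : K*(e/8) = K*(e/16) + K*(e/16) := by ring
  have hexp5 : K*(e/16) = K*(e/32) + K*(e/64) + K*(e/64) := by ring
  rw [hexp1] at hlow
  -- conclude log phi ≥ 2 L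
  have hmain : 2*L ≤ Real.log (phi n k q) := by
    have : K*(e/16) - 3*Real.log n - 1 ≤ Real.log (phi n k q) := by linarith
    have h7 : 7*Real.log n - 3*Real.log n - 1 ≤ Real.log (phi n k q) := by linarith
    have h8 : 2*L ≤ 4*Real.log n - 1 := by linarith
    linarith
  have hL0 : (0:ℝ) < L := by linarith
  have hphi0 : 0 < phi n k q := phi_pos hk hkn hq hq1
  calc L < Real.exp L := by
        have := Real.add_one_le_exp L; linarith
    _ ≤ Real.exp (Real.log (phi n k q)) := by
        apply Real.exp_le_exp.2; linarith
    _ = phi n k q := Real.exp_log hphi0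

lemma phi_one (n : ℕ) (q : ℝ) : phi n 1 q = n := by
  simp [phi, Nat.choose_one_right, Real.one_rpow]

lemma ev_log (c c' c'' : ℝ) (hc : 0 < c) :
    ∀ᶠ x : ℝ in atTop, c' * Real.log x + c'' ≤ c * x := by
  have h := Real.isLittleO_log_id_atTop.def (show 0 < c/(2*(|c'|+1)) by positivity)
  filter_upwards [h, eventually_ge_atTop (2*|c''|/c), eventually_ge_atTop 1] with x hx hx2 hx1
  have hlx : 0 ≤ Real.log x := Real.log_nonneg hx1
  have hx0 : (0:ℝ) ≤ x := by linarith
  simp only [id] at hx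
  rw [Real.norm_eq_abs, Real.norm_eq_abs, abs_of_nonneg hlx, abs_of_nonneg hx0] at hx
  have h1 : c' * Real.log x ≤ |c'| * Real.log x :=
    mul_le_mul_of_nonneg_right (le_abs_self c') hlx
  have h2 : |c'| * Real.log x ≤ |c'| * (c/(2*(|c'|+1)) * x) :=
    mul_le_mul_of_nonneg_left hx (abs_nonneg c')
  have h3 : |c'| * (c/(2*(|c'|+1)) * x) ≤ (c/2) * x := by
    have he1 : |c'| * (c/(2*(|c'|+1)) * x) = (|c'| * (c*x)) / (2*(|c'|+1)) := by ring
    rw [he1, div_le_iff₀ (by positivity)]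
    nlinarith [mul_nonneg hc.le hx0, abs_nonneg c']
  have h4 : c'' ≤ (c/2)*x := by
    have hxx : 2*|c''| ≤ c*x := by
      rw [div_le_iff₀ hc] at hx2
      linarith [mul_comm x c]
    calc c'' ≤ |c''| := le_abs_self _
      _ ≤ (c/2)*x := by linarith
  linarith

theorem kzero_asymptotics (p : ℕ → ℝ) (hp : ∀ n, p n ∈ Set.Ioo (0 : ℝ) 1)
    (h1 : Tendsto (fun n : ℕ => (n : ℝ) * p n) atTop atTop)
    (h2 : Tendsto (fun n : ℕ => p n * (Real.log n) ^ 2) atTop (nhds 0)) :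
    Tendsto (fun n : ℕ => (kzero p n : ℝ) * p n - 2 * Real.log (n * p n))
      atTop (nhds 2) := by
  rw [Metric.tendsto_atTop]
  intro ε hε
  set e := min ε 1 with hedef
  have he : 0 < e := lt_min hε one_pos
  have he1 : e ≤ 1 := min_le_right _ _
  have heε : e ≤ ε := min_le_left _ _
  -- global tendsto facts
  have hlogn_ev : ∀ᶠ n : ℕ in atTop, 1 ≤ Real.log n := by
    have := (Real.tendsto_log_atTop.comp tendsto_natCast_atTop_atTop).eventually_ge_atTop 1
    exact this.mono fun n h => by simpa using h
  have hq0 : Tendsto p atTop (nhds 0) := by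
    apply squeeze_zero' (Eventually.of_forall fun n => (hp n).1.le)
      (hlogn_ev.mono fun n hn => ?_) h2
    have h9 : (0:ℝ) ≤ p n * (Real.log n ^ 2 - 1) :=
      mul_nonneg (hp n).1.le (by nlinarith)
    nlinarith [h9]
  have hql : Tendsto (fun n : ℕ => p n * Real.log n) atTop (nhds 0) := by
    apply squeeze_zero' (hlogn_ev.mono fun n hn =>
        mul_nonneg (hp n).1.le (by linarith))
      (hlogn_ev.mono fun n hn => ?_) h2
    have h9 : (0:ℝ) ≤ (p n * Real.log n) * (Real.log n - 1) :=
      mul_nonneg (mul_nonneg (hp n).1.le (by linarith)) (by linarith)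
    nlinarith [h9]
  have evA : ∀ᶠ n : ℕ in atTop, 4 * Real.log ((n:ℝ) * p n) + 6 ≤ 1 * ((n:ℝ) * p n) :=
    h1.eventually (ev_log 1 4 6 one_pos)
  have evB : ∀ᶠ n : ℕ in atTop,
      128 * Real.log ((n:ℝ) * p n) + 192 ≤ e * ((n:ℝ) * p n) :=
    h1.eventually (ev_log e 128 192 he)
  have evL1 : ∀ᶠ n : ℕ in atTop, 1 ≤ Real.log ((n:ℝ) * p n) :=
    h1.eventually (Real.tendsto_log_atTop.eventually_ge_atTop 1)
  have evnq1 : ∀ᶠ n : ℕ in atTop, 1 ≤ (n:ℝ) * p n := h1.eventually_ge_atTop 1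
  have evq : ∀ᶠ n : ℕ in atTop, p n ≤ e/256 :=
    hq0.eventually (eventually_le_nhds (by positivity))
  have evql : ∀ᶠ n : ℕ in atTop, p n * Real.log n ≤ e/256 :=
    hql.eventually (eventually_le_nhds (by positivity))
  have main : ∀ᶠ n : ℕ in atTop,
      |((kzero p n : ℝ) * p n - 2 * Real.log ((n:ℝ) * p n)) - 2| < ε := by
    filter_upwards [hlogn_ev, evA, evB, evL1, evnq1, evq, evql, eventually_ge_atTop 1]
      with n hlogn1 hA hB hL1 hnq1 hqs hqln hn1
    obtain ⟨hq, hq1⟩ := hp n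
    set q := p n with hqdef
    set L := Real.log ((n:ℝ) * q) with hLdef
    have hn0 : (0:ℝ) < n := by exact_mod_cast hn1
    have hnq0 : (0:ℝ) < (n:ℝ)*q := by positivity
    -- the set S
    set S : Set ℕ := {k : ℕ | 1 ≤ k ∧ k ≤ n ∧ Real.log ((n:ℝ) * p n) < phi n k (p n)}
      with hSdef
    have hkzero : kzero p n = sSup S := rfl
    set m : ℕ := sSup S with hm
    have hbdd : BddAbove S := ⟨n, fun x hx => hx.2.1⟩
    have hS1 : 1 ∈ S := by
      refine ⟨le_refl 1, hn1, ?_⟩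
      rw [phi_one]
      have h3 : Real.log ((n:ℝ)*q) ≤ Real.log n := by
        apply Real.log_le_log hnq0
        nlinarith
      have h4 : Real.log n ≤ (n:ℝ) - 1 := by
        have := Real.log_le_sub_one_of_pos hn0
        linarith
      calc Real.log ((n:ℝ) * p n) ≤ Real.log (n:ℝ) := h3
        _ ≤ (n:ℝ) - 1 := h4
        _ < n := by linarith
    have hne : S.Nonempty := ⟨1, hS1⟩
    have hmem : m ∈ S := by rw [hm]; exact Nat.sSup_mem hne hbdd
    obtain ⟨hkz1, hkzn, hphiz⟩ := hmem
    -- PART 2 : upper bound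
    have upper : (m : ℝ) * q < 2*L + 2 + e := by
      by_contra hcon
      push_neg at hcon
      have := part2 he hkz1 hkzn hq hq1 hL1 (by linarith) (by linarith) hnq1 hcon
      exact absurd hphiz (not_lt.2 this)
    -- PART 1 : lower bound
    have lower : 2*L + 2 - e/2 ≤ (m : ℝ) * q := by
      set t := (2*L + 2 - e/2)/q with htdef
      have hnum : (0:ℝ) < 2*L + 2 - e/2 := by linarith
      have ht0 : 0 < t := by positivity
      set k₁ := ⌈t⌉₊ with hk1def
      have hceil_ge : t ≤ (k₁:ℝ) := Nat.le_ceil t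
      have hceil_lt : (k₁:ℝ) < t + 1 := Nat.ceil_lt_add_one ht0.le
      have htq : t * q = 2*L + 2 - e/2 := div_mul_cancel₀ _ (ne_of_gt hq)
      have hkq1 : 2*L + 2 - e/2 ≤ (k₁:ℝ)*q := by
        rw [← htq]
        exact mul_le_mul_of_nonneg_right hceil_ge hq.le
      have hkq2 : (k₁:ℝ)*q ≤ 2*L + 2 - e/4 := by
        have : (k₁:ℝ)*q ≤ (t+1)*q := mul_le_mul_of_nonneg_right hceil_lt.le hq.le
        have h6 : (t+1)*q = (2*L + 2 - e/2) + q := by rw [add_mul, htq, one_mul]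
        linarith
      have hk11 : 1 ≤ k₁ := Nat.one_le_iff_ne_zero.2 (by
        have := Nat.ceil_pos.2 ht0
        omega)
      have h2k1 : 2*k₁ ≤ n := by
        have hr : 2*(k₁:ℝ)*q ≤ (n:ℝ)*q := by
          calc 2*(k₁:ℝ)*q = 2*((k₁:ℝ)*q) := by ring
            _ ≤ 2*(2*L+2-e/4) := by linarith
            _ ≤ 4*L + 6 := by linarith
            _ ≤ 1*((n:ℝ)*q) := hA
            _ = (n:ℝ)*q := by ring
        have : 2*(k₁:ℝ) ≤ (n:ℝ) := le_of_mul_le_mul_right hr hq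
        exact_mod_cast this
      have hfrac : 64*(2*L+3) ≤ e*((n:ℝ)*q) := by linarith
      have hphi1 := part1 he he1 hk11 h2k1 hq hq1 hL1 hlogn1 hqs hqln hkq1 hkq2 hfrac
      have hk1S : k₁ ∈ S := ⟨hk11, by omega, hphi1⟩
      have hle : k₁ ≤ m := by rw [hm]; exact le_csSup hbdd hk1S
      have hleR : (k₁:ℝ) ≤ (m : ℝ) := by exact_mod_cast hle
      calc 2*L + 2 - e/2 ≤ (k₁:ℝ)*q := hkq1
        _ ≤ (m : ℝ)*q := mul_le_mul_of_nonneg_right hleR hq.le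
    rw [hkzero, abs_lt]
    constructor <;> linarith
  rw [eventually_atTop] at main
  obtain ⟨N, hN⟩ := main
  refine ⟨N, fun n hn => ?_⟩
  rw [Real.dist_eq]
  exact hN n hn
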